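/- If G is a connected graph of order n, maximum degree 3, and girth at least 5, then Z(G) ≤ n/2 − n/(24·log₂(n) + 6) + 2. -/

import Mathlib

namespace SimpleGraph

variable {V : Type*}

/-- `G.ZeroForces Z v` : vertex `v` is eventually colored when starting from `Z`
and iteratively adding any vertex that is the unique uncolored neighbor of a colored vertex. -/
inductive ZeroForces (G : SimpleGraph V) (Z : Set V) : V → Prop
  | base {v : V} : v ∈ Z → ZeroForces G Z v
  | force {v u : V} : ZeroForces G Z v → G.Adj v u →
      (∀ w, G.Adj v w → w ≠ u → ZeroForces G Z w) → ZeroForces G Z u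

/-- The forcing closure `F(Z)`. -/
def zfClosure (G : SimpleGraph V) (Z : Set V) : Set V := {v | G.ZeroForces Z v}

/-- `Z` is a zero forcing set of `G`. -/
def IsZeroForcingSet (G : SimpleGraph V) (Z : Set V) : Prop := ∀ v, G.ZeroForces Z v

/-- The zero forcing number `Z(G)`. -/
noncomputable def zeroForcingNumber (G : SimpleGraph V) [Fintype V] : ℕ :=
  sInf {k | ∃ Z : Finset V, Z.card = k ∧ G.IsZeroForcingSet ↑Z}

end SimpleGraph

set_option linter.unusedSectionVars false
set_option maxHeartbeats 1000000

namespace ZFAux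

open Finset SimpleGraph

variable {V : Type*} [Fintype V] [DecidableEq V] (G : SimpleGraph V) [DecidableRel G.Adj]

lemma zf_mono {Z Z' : Set V} (h : Z ⊆ Z') {v : V} (hv : G.ZeroForces Z v) :
    G.ZeroForces Z' v := by
  induction hv with
  | base hz => exact .base (h hz)
  | force _ hadj _ ih1 ih2 => exact .force ih1 hadj ih2

lemma zf_trans {Z Z₀ : Set V} (h : ∀ x ∈ Z, G.ZeroForces Z₀ x) {v : V}
    (hv : G.ZeroForces Z v) : G.ZeroForces Z₀ v := by
  induction hv with
  | base hz => exact h _ hz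
  | force _ hadj _ ih1 ih2 => exact .force ih1 hadj ih2

noncomputable def clo (Z : Set V) : Finset V := (Set.toFinite {v | G.ZeroForces Z v}).toFinset

lemma mem_clo {Z : Set V} {v : V} : v ∈ clo G Z ↔ G.ZeroForces Z v := by
  simp [clo]

lemma subset_clo {Z : Set V} {v : V} (hv : v ∈ Z) : v ∈ clo G Z :=
  (mem_clo G).2 (.base hv)

def Closed (B : Finset V) : Prop :=
  ∀ v ∈ B, ∀ u, G.Adj v u → u ∉ B → ∃ w, G.Adj v w ∧ w ∉ B ∧ w ≠ u

def Linked (B : Finset V) : Prop := ∀ v ∈ B, ∃ w ∈ B, G.Adj v w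

lemma clo_closed (Z : Set V) : Closed G (clo G Z) := by
  intro v hv u hadj hu
  by_contra hno
  push_neg at hno
  refine hu <| (mem_clo G).2 <| .force ((mem_clo G).1 hv) hadj fun w hw hne => ?_
  by_cases hwc : w ∈ clo G Z
  · exact (mem_clo G).1 hwc
  · exact absurd (hno w hw hwc) hne

lemma clo_linked {Z : Set V} (h : ∀ x ∈ Z, ∃ w, G.Adj x w ∧ G.ZeroForces Z w) :
    Linked G (clo G Z) := by
  intro v hv
  induction (mem_clo G).1 hv with
  | @base x hz => obtain ⟨w, hw, hzw⟩ := h x hz; exact ⟨w, (mem_clo G).2 hzw, hw⟩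
  | @force x u hx hadj hall _ _ => exact ⟨x, (mem_clo G).2 hx, hadj.symm⟩

/-! ### counting -/

def cdeg (B : Finset V) (v : V) : ℕ := (G.neighborFinset v ∩ B).card

def udeg (B : Finset V) (v : V) : ℕ := (G.neighborFinset v ∩ Bᶜ).card

def ecnt (B : Finset V) : ℕ := ∑ v ∈ Bᶜ, cdeg G B v

def lcnt (B : Finset V) : ℕ := (Bᶜ.filter (fun v => G.degree v = 1)).card

def pcnt (B : Finset V) : ℕ :=
  (Bᶜ.filter (fun v => G.degree v = 1 ∧ cdeg G B v = 1)).card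

def psi (B : Finset V) : ℤ :=
  77 * (Bᶜ.card : ℤ) + 12 * lcnt G B + 2 * pcnt G B - 7 * ecnt G B

lemma cdeg_le_deg (B : Finset V) (v : V) : cdeg G B v ≤ G.degree v := by
  rw [← card_neighborFinset_eq_degree]
  exact card_le_card inter_subset_left

lemma double_count (A C : Finset V) :
    ∑ v ∈ A, (G.neighborFinset v ∩ C).card = ∑ v ∈ C, (G.neighborFinset v ∩ A).card := by
  have key : ∀ X Y : Finset V, ∑ v ∈ X, (G.neighborFinset v ∩ Y).card
      = ∑ v ∈ X, ∑ w ∈ Y, if G.Adj v w then 1 else 0 := by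
    intro X Y
    refine Finset.sum_congr rfl fun v _ => ?_
    rw [← Finset.card_filter]
    congr 1
    ext w
    simp [SimpleGraph.mem_neighborFinset, and_comm]
  rw [key, key, Finset.sum_comm]
  refine Finset.sum_congr rfl fun v _ => Finset.sum_congr rfl fun w _ => by
    simp only [G.adj_comm]

lemma compl_eq_union {B B' : Finset V} (h : B ⊆ B') : Bᶜ = B'ᶜ ∪ (B' \ B) := by
  ext v
  simp only [mem_compl, mem_union, mem_sdiff]
  constructor
  · intro hv; by_cases hb : v ∈ B' <;> tauto
  · rintro (hv | ⟨_, hv⟩) <;> intro hb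
    · exact hv (h hb)
    · exact hv hb

lemma compl_disj {B B' : Finset V} : Disjoint (B'ᶜ) (B' \ B) := by
  rw [Finset.disjoint_left]
  intro a ha hb
  simp only [mem_compl] at ha
  exact ha (mem_sdiff.1 hb).1

lemma card_compl_split {B B' : Finset V} (h : B ⊆ B') :
    Bᶜ.card = B'ᶜ.card + (B' \ B).card := by
  rw [compl_eq_union h, card_union_of_disjoint compl_disj]

lemma union_eq_of_subset {B B' : Finset V} (h : B ⊆ B') : B' = B ∪ (B' \ B) := by
  ext v; simp only [mem_union, mem_sdiff]; constructor
  · intro hv; by_cases hb : v ∈ B <;> tauto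
  · rintro (hv | ⟨hv, _⟩)
    · exact h hv
    · exact hv

lemma disj_sdiff' {B B' : Finset V} : Disjoint B (B' \ B) := by
  rw [Finset.disjoint_left]; intro a ha hb; exact (mem_sdiff.1 hb).2 ha

lemma ecnt_split {B B' : Finset V} (h : B ⊆ B') :
    ecnt G B' + ∑ t ∈ B' \ B, cdeg G B t = ecnt G B + ∑ t ∈ B' \ B, udeg G B' t := by
  have h1 : ecnt G B = ∑ v ∈ B'ᶜ, cdeg G B v + ∑ t ∈ B' \ B, cdeg G B t := by
    rw [ecnt, compl_eq_union h, Finset.sum_union compl_disj]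
  have h2 : ∀ v, cdeg G B' v = cdeg G B v + (G.neighborFinset v ∩ (B' \ B)).card := by
    intro v
    rw [cdeg, cdeg, ← card_union_of_disjoint, ← Finset.inter_union_distrib_left,
      ← union_eq_of_subset h]
    exact Finset.disjoint_of_subset_left inter_subset_right
      (Finset.disjoint_of_subset_right inter_subset_right disj_sdiff')
  have h3 : ecnt G B' = ∑ v ∈ B'ᶜ, cdeg G B v + ∑ v ∈ B'ᶜ, (G.neighborFinset v ∩ (B' \ B)).card := by
    rw [ecnt, ← Finset.sum_add_distrib]
    exact Finset.sum_congr rfl fun v _ => h2 v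
  have h4 : ∑ v ∈ B'ᶜ, (G.neighborFinset v ∩ (B' \ B)).card
      = ∑ t ∈ B' \ B, udeg G B' t := by
    rw [double_count]
    rfl
  omega

lemma lcnt_split {B B' : Finset V} (h : B ⊆ B') :
    lcnt G B = lcnt G B' + ((B' \ B).filter (fun v => G.degree v = 1)).card := by
  rw [lcnt, lcnt, compl_eq_union h, Finset.filter_union,
    card_union_of_disjoint (Finset.disjoint_filter_filter compl_disj)]

lemma leaf_unique_nbr {v : V} (hv : G.degree v = 1) : ∃ x, G.neighborFinset v = {x} := by
  rw [← card_neighborFinset_eq_degree] at hv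
  exact Finset.card_eq_one.1 hv


lemma adj_of_nbr_singleton {w x : V} (hx : G.neighborFinset w = {x}) : G.Adj w x := by
  have : x ∈ G.neighborFinset w := by rw [hx]; exact mem_singleton_self x
  exact (G.mem_neighborFinset w x).1 this

lemma eq_of_nbr_singleton {w x z : V} (hx : G.neighborFinset w = {x}) (hz : G.Adj w z) :
    z = x := by
  have : z ∈ G.neighborFinset w := (G.mem_neighborFinset w z).2 hz
  rw [hx] at this
  exact mem_singleton.1 this

lemma pcnt_le {B B' : Finset V} (h : B ⊆ B') :
    pcnt G B' ≤ pcnt G B + ∑ t ∈ B' \ B, udeg G B' t := by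
  have hsub : B'ᶜ.filter (fun v => G.degree v = 1 ∧ cdeg G B' v = 1)
      ⊆ (Bᶜ.filter (fun v => G.degree v = 1 ∧ cdeg G B v = 1))
        ∪ (B' \ B).biUnion (fun t => G.neighborFinset t ∩ B'ᶜ) := by
    intro w hw
    simp only [mem_filter, mem_compl] at hw
    obtain ⟨hwB', hdw, hcd⟩ := hw
    obtain ⟨x, hx⟩ := leaf_unique_nbr G hdw
    have hxB' : x ∈ B' := by
      by_contra hxB'
      have hemp : G.neighborFinset w ∩ B' = ∅ := by
        rw [hx, Finset.singleton_inter_of_notMem hxB']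
      rw [cdeg, hemp] at hcd
      simp at hcd
    by_cases hxB : x ∈ B
    · refine mem_union_left _ ?_
      simp only [mem_filter, mem_compl]
      refine ⟨fun hwB => hwB' (h hwB), hdw, ?_⟩
      rw [cdeg, hx, Finset.singleton_inter_of_mem hxB, Finset.card_singleton]
    · refine mem_union_right _ ?_
      simp only [mem_biUnion]
      refine ⟨x, mem_sdiff.2 ⟨hxB', hxB⟩, ?_⟩
      simp only [mem_inter, mem_neighborFinset, mem_compl]
      exact ⟨(adj_of_nbr_singleton G hx).symm, hwB'⟩
  calc pcnt G B' ≤ ((Bᶜ.filter (fun v => G.degree v = 1 ∧ cdeg G B v = 1))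
        ∪ (B' \ B).biUnion (fun t => G.neighborFinset t ∩ B'ᶜ)).card := card_le_card hsub
    _ ≤ pcnt G B + ((B' \ B).biUnion (fun t => G.neighborFinset t ∩ B'ᶜ)).card :=
        card_union_le _ _
    _ ≤ pcnt G B + ∑ t ∈ B' \ B, udeg G B' t := by
        exact Nat.add_le_add_left (card_biUnion_le) _

def R2cond (B : Finset V) : Prop := ∃ ℓ, ℓ ∉ B ∧ G.degree ℓ = 1 ∧ ∀ x, G.Adj ℓ x → x ∉ B

lemma pcnt_drop {B B' : Finset V} (h : B ⊆ B') (hnr2 : ¬ R2cond G B) :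
    pcnt G B' + ((B' \ B).filter (fun v => G.degree v = 1)).card ≤ pcnt G B := by
  have hpend : ∀ w, w ∉ B → G.degree w = 1 → cdeg G B w = 1 := by
    intro w hwB hdw
    obtain ⟨x, hx⟩ := leaf_unique_nbr G hdw
    have hxB : x ∈ B := by
      by_contra hxB
      exact hnr2 ⟨w, hwB, hdw, fun z hz => by
        rw [eq_of_nbr_singleton G hx hz]; exact hxB⟩
    rw [cdeg, hx, Finset.singleton_inter_of_mem hxB, Finset.card_singleton]
  have h1 : B'ᶜ.filter (fun v => G.degree v = 1 ∧ cdeg G B' v = 1)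
      ∪ (B' \ B).filter (fun v => G.degree v = 1)
      ⊆ Bᶜ.filter (fun v => G.degree v = 1 ∧ cdeg G B v = 1) := by
    intro w hw
    simp only [mem_filter, mem_compl, mem_union, mem_sdiff] at hw ⊢
    rcases hw with ⟨hwB', hdw, _⟩ | ⟨⟨_, hwB⟩, hdw⟩
    · have hwB : w ∉ B := fun hwB => hwB' (h hwB)
      exact ⟨hwB, hdw, hpend w hwB hdw⟩
    · exact ⟨hwB, hdw, hpend w hwB hdw⟩
  have h2 : Disjoint (B'ᶜ.filter (fun v => G.degree v = 1 ∧ cdeg G B' v = 1))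
      ((B' \ B).filter (fun v => G.degree v = 1)) := by
    refine Finset.disjoint_filter_filter ?_
    rw [Finset.disjoint_left]
    intro a ha hb
    exact (mem_compl.1 ha) (mem_sdiff.1 hb).1
  calc pcnt G B' + ((B' \ B).filter (fun v => G.degree v = 1)).card
      = (B'ᶜ.filter (fun v => G.degree v = 1 ∧ cdeg G B' v = 1)
        ∪ (B' \ B).filter (fun v => G.degree v = 1)).card := (card_union_of_disjoint h2).symm
    _ ≤ pcnt G B := card_le_card h1

lemma psi_general (hdeg : ∀ v, G.degree v ≤ 3) {B B' : Finset V} (h : B ⊆ B') :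
    psi G B' + 56 * ((B' \ B).card : ℤ) ≤ psi G B := by
  have hcard := card_compl_split h
  have hecnt := ecnt_split G h
  have hlcnt := lcnt_split G h
  have hpcnt := pcnt_le G h
  have hC : ∑ t ∈ B' \ B, cdeg G B t ≤ 3 * (B' \ B).card := by
    calc ∑ t ∈ B' \ B, cdeg G B t ≤ ∑ _t ∈ B' \ B, 3 :=
          Finset.sum_le_sum fun t _ => (cdeg_le_deg G B t).trans (hdeg t)
      _ = 3 * (B' \ B).card := by rw [Finset.sum_const, smul_eq_mul, Nat.mul_comm]
  have h1 : (Bᶜ.card : ℤ) = B'ᶜ.card + (B' \ B).card := by exact_mod_cast hcard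
  have h2 : (ecnt G B' : ℤ) + ∑ t ∈ B' \ B, (cdeg G B t : ℤ)
      = ecnt G B + ∑ t ∈ B' \ B, (udeg G B' t : ℤ) := by exact_mod_cast hecnt
  have h3 : (lcnt G B : ℤ)
      = lcnt G B' + ((B' \ B).filter (fun v => G.degree v = 1)).card := by exact_mod_cast hlcnt
  have h4 : (pcnt G B' : ℤ) ≤ pcnt G B + ∑ t ∈ B' \ B, (udeg G B' t : ℤ) := by
    exact_mod_cast hpcnt
  have h5 : (∑ t ∈ B' \ B, (cdeg G B t : ℤ)) ≤ 3 * (B' \ B).card := by exact_mod_cast hC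
  have h6 : (0:ℤ) ≤ ((B' \ B).filter (fun v => G.degree v = 1)).card := by positivity
  have h7 : (0:ℤ) ≤ ∑ t ∈ B' \ B, (udeg G B' t : ℤ) :=
    Finset.sum_nonneg fun t _ => by positivity
  simp only [psi]
  linarith

lemma four_nbrs (hdeg : ∀ v, G.degree v ≤ 3) {b a1 a2 a3 a4 : V}
    (h1 : G.Adj b a1) (h2 : G.Adj b a2) (h3 : G.Adj b a3) (h4 : G.Adj b a4)
    (d12 : a1 ≠ a2) (d13 : a1 ≠ a3) (d14 : a1 ≠ a4)
    (d23 : a2 ≠ a3) (d24 : a2 ≠ a4) (d34 : a3 ≠ a4) : False := by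
  have hsub : ({a1, a2, a3, a4} : Finset V) ⊆ G.neighborFinset b := by
    intro z hz
    simp only [mem_insert, mem_singleton] at hz
    rw [G.mem_neighborFinset]
    rcases hz with rfl | rfl | rfl | rfl <;> assumption
  have hc : ({a1, a2, a3, a4} : Finset V).card = 4 := by
    rw [card_insert_of_notMem (by simp [d12, d13, d14]),
      card_insert_of_notMem (by simp [d23, d24]),
      card_insert_of_notMem (by simp [d34]), card_singleton]
  have hle := card_le_card hsub
  rw [hc, card_neighborFinset_eq_degree] at hle
  have := hdeg b
  omega

lemma walk_boundary {B : Finset V} {a b : V} (p : G.Walk a b) (ha : a ∈ B) (hb : b ∉ B) :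
    ∃ x ∈ B, ∃ y, y ∉ B ∧ G.Adj x y := by
  induction p with
  | nil => exact absurd ha hb
  | @cons a c b hadj q ih =>
    by_cases hc : c ∈ B
    · exact ih hc hb
    · exact ⟨a, ha, c, hc, hadj⟩

lemma exists_boundary (hpre : G.Preconnected) {B : Finset V} (hne : B.Nonempty)
    (hnu : B ≠ Finset.univ) : ∃ x ∈ B, ∃ y, y ∉ B ∧ G.Adj x y := by
  obtain ⟨v, hv⟩ := hne
  have : ∃ w, w ∉ B := by
    by_contra hno
    push_neg at hno
    exact hnu (Finset.eq_univ_iff_forall.2 hno)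
  obtain ⟨w, hw⟩ := this
  obtain ⟨p⟩ := hpre v w
  exact walk_boundary G p hv hw

section Round

variable {V : Type*} [Fintype V] [DecidableEq V] (G : SimpleGraph V) [DecidableRel G.Adj]

lemma round (hdeg : ∀ v, G.degree v ≤ 3)
    (htri : ∀ a b c : V, G.Adj a b → G.Adj b c → G.Adj c a → False)
    (hc4 : ∀ a b c d : V, G.Adj a b → G.Adj b c → G.Adj c d → G.Adj d a →
      a ≠ c → b ≠ d → False)
    (hpre : G.Preconnected)
    {B : Finset V} (hcl : Closed G B) (hlk : Linked G B) (hne : B.Nonempty)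
    (hnu : B ≠ Finset.univ) :
    ∃ y, y ∉ B ∧ B ⊆ clo G (↑B ∪ {y}) ∧ Linked G (clo G (↑B ∪ {y})) ∧
      (clo G (↑B ∪ {y})).Nonempty ∧
      2 + (clo G (↑B ∪ {y}))ᶜ.card ≤ Bᶜ.card ∧
      psi G (clo G (↑B ∪ {y})) + 168 ≤ psi G B := by
  by_cases hr2 : R2cond G B
  · -- Case 1 : a leaf with uncoloured neighbour exists
    obtain ⟨l, hlB, hdl, hall⟩ := hr2
    obtain ⟨x, hx⟩ := leaf_unique_nbr G hdl
    have hadjlx : G.Adj l x := adj_of_nbr_singleton G hx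
    have hxB : x ∉ B := hall x hadjlx
    have hlx : l ≠ x := hadjlx.ne
    have hBB' : B ⊆ clo G (↑B ∪ {l}) :=
      fun z hz => subset_clo G (Set.mem_union_left _ (Finset.mem_coe.2 hz))
    set B' := clo G ((↑B : Set V) ∪ {l}) with hB'def
    have hlB' : l ∈ B' := subset_clo G (Set.mem_union_right _ rfl)
    have hxB' : x ∈ B' := (mem_clo G).2 <| .force (.base (Set.mem_union_right _ rfl)) hadjlx
      (fun w hw hne' => absurd (eq_of_nbr_singleton G hx hw) hne')
    have hlk' : Linked G B' := by
      apply clo_linked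
      rintro z (hz | hz)
      · obtain ⟨w, hwB, hadj⟩ := hlk z (Finset.mem_coe.1 hz)
        exact ⟨w, hadj, .base (Set.mem_union_left _ (Finset.mem_coe.2 hwB))⟩
      · rw [Set.mem_singleton_iff] at hz
        subst hz
        exact ⟨x, hadjlx, (mem_clo G).1 hxB'⟩
    have hpair : ({l, x} : Finset V) ⊆ B' \ B := by
      intro z hz
      rcases Finset.mem_insert.1 hz with rfl | hz
      · exact Finset.mem_sdiff.2 ⟨hlB', hlB⟩
      · rw [Finset.mem_singleton.1 hz]
        exact Finset.mem_sdiff.2 ⟨hxB', hxB⟩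
    have hpaircard : ({l, x} : Finset V).card = 2 := Finset.card_pair hlx
    have hT2 : 2 ≤ (B' \ B).card := hpaircard ▸ Finset.card_le_card hpair
    have hsplit : Bᶜ.card = B'ᶜ.card + (B' \ B).card := card_compl_split hBB'
    have hpsi : psi G B' + 168 ≤ psi G B := by
      by_cases h3 : 3 ≤ (B' \ B).card
      · have hgen := psi_general G hdeg hBB'
        have h3' : (3:ℤ) ≤ ((B' \ B).card : ℤ) := by exact_mod_cast h3
        linarith
      · have hTcard : (B' \ B).card = 2 := le_antisymm (by omega) hT2
        have hT : B' \ B = {l, x} :=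
          (Finset.eq_of_subset_of_card_le hpair (by omega)).symm
        have hcl0 : cdeg G B l = 0 := by
          rw [cdeg, hx, Finset.singleton_inter_of_notMem hxB, Finset.card_empty]
        have hul0 : udeg G B' l = 0 := by
          rw [udeg, hx, Finset.singleton_inter_of_notMem (by
            simp only [Finset.mem_compl, not_not]; exact hxB'), Finset.card_empty]
        have hcx0 : cdeg G B x = 0 := by
          rw [cdeg, Finset.card_eq_zero, Finset.eq_empty_iff_forall_notMem]
          intro b hb
          rw [Finset.mem_inter, G.mem_neighborFinset] at hb
          obtain ⟨hadjxb, hbB⟩ := hb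
          obtain ⟨xi, hadjbxi, hxiB, hxix⟩ := hcl b hbB x hadjxb.symm hxB
          have hxiB' : xi ∈ B' := by
            by_contra hxiB'
            obtain ⟨w, hadjbw, hwB', hwxi⟩ :=
              clo_closed G _ b (hBB' hbB) xi hadjbxi hxiB'
            obtain ⟨bb, hbbB, hadjbbb⟩ := hlk b hbB
            have hwB : w ∉ B := fun hw => hwB' (hBB' hw)
            exact four_nbrs G hdeg hadjbbb hadjxb.symm hadjbxi hadjbw
              (fun h => hxB (h ▸ hbbB)) (fun h => hxiB (h ▸ hbbB))
              (fun h => hwB (h ▸ hbbB)) (fun h => hxix h.symm)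
              (fun h => hwB' (h ▸ hxB')) (fun h => hwxi h.symm)
          have hmem : xi ∈ ({l, x} : Finset V) :=
            hT ▸ Finset.mem_sdiff.2 ⟨hxiB', hxiB⟩
          rcases Finset.mem_insert.1 hmem with rfl | hmem
          · exact hxB ((eq_of_nbr_singleton G hx hadjbxi.symm) ▸ hbB)
          · exact hxix (Finset.mem_singleton.1 hmem)
        have hrest : ∀ w, G.Adj x w → w ≠ l → w ∉ B' := by
          intro w hadjxw hwl hwB'
          have hwB : w ∉ B := by
            intro hwB
            have hmem : w ∈ G.neighborFinset x ∩ B := by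
              rw [Finset.mem_inter, G.mem_neighborFinset]; exact ⟨hadjxw, hwB⟩
            rw [cdeg, Finset.card_eq_zero] at hcx0
            rw [hcx0] at hmem
            exact absurd hmem (Finset.notMem_empty w)
          have hmem : w ∈ ({l, x} : Finset V) := hT ▸ Finset.mem_sdiff.2 ⟨hwB', hwB⟩
          rcases Finset.mem_insert.1 hmem with rfl | hmem
          · exact hwl rfl
          · exact G.loopless.irrefl x (Finset.mem_singleton.1 hmem ▸ hadjxw)
        have hmemlx : l ∈ G.neighborFinset x := (G.mem_neighborFinset x l).2 hadjlx.symm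
        have herase : G.neighborFinset x ∩ B'ᶜ = (G.neighborFinset x).erase l := by
          ext w
          simp only [Finset.mem_inter, Finset.mem_compl, Finset.mem_erase,
            G.mem_neighborFinset]
          constructor
          · rintro ⟨hadj, hw⟩
            exact ⟨fun h => hw (by rw [h]; exact hlB'), hadj⟩
          · rintro ⟨hwl, hadj⟩
            exact ⟨hadj, hrest w hadj hwl⟩
        have hux : udeg G B' x = G.degree x - 1 := by
          rw [udeg, herase, Finset.card_erase_of_mem hmemlx,
            card_neighborFinset_eq_degree]
        have hdx1 : 1 ≤ G.degree x := by
          rw [← card_neighborFinset_eq_degree]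
          exact Finset.card_pos.2 ⟨l, hmemlx⟩
        have hdxne2 : G.degree x ≠ 2 := by
          intro hdx
          have hcard2 : (G.neighborFinset x).card = 2 := by
            rw [card_neighborFinset_eq_degree]; exact hdx
          have hcard1 : ((G.neighborFinset x).erase l).card = 1 := by
            rw [Finset.card_erase_of_mem hmemlx, hcard2]
          obtain ⟨w, hw⟩ := Finset.card_eq_one.1 hcard1
          have hwmem : w ∈ (G.neighborFinset x).erase l := by
            rw [hw]; exact Finset.mem_singleton_self w
          have hwl : w ≠ l := (Finset.mem_erase.1 hwmem).1
          have hadjxw : G.Adj x w :=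
            (G.mem_neighborFinset x w).1 (Finset.mem_erase.1 hwmem).2
          have hwB' : w ∉ B' := hrest w hadjxw hwl
          obtain ⟨w', hadjxw', hw'B', hw'w⟩ :=
            clo_closed G _ x hxB' w hadjxw hwB'
          have hmem' : w' ∈ (G.neighborFinset x).erase l :=
            Finset.mem_erase.2 ⟨fun h => hw'B' (by rw [h]; exact hlB'),
              (G.mem_neighborFinset x w').2 hadjxw'⟩
          rw [hw] at hmem'
          exact hw'w (Finset.mem_singleton.1 hmem')
        have hsumc : ∑ t ∈ B' \ B, cdeg G B t = 0 := by
          rw [hT, Finset.sum_pair hlx, hcl0, hcx0]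
        have hsumu : ∑ t ∈ B' \ B, udeg G B' t = G.degree x - 1 := by
          rw [hT, Finset.sum_pair hlx, hul0, hux]; omega
        have hecnt := ecnt_split G hBB'
        have hlcnt := lcnt_split G hBB'
        have hpcnt := pcnt_le G hBB'
        rw [hsumc, hsumu] at hecnt
        rw [hsumu] at hpcnt
        have hdx13 : G.degree x = 1 ∨ G.degree x = 3 := by
          have := hdeg x; omega
        rcases hdx13 with hdx | hdx
        · have hfleaf : ((B' \ B).filter (fun v => G.degree v = 1)).card = 2 := by
            rw [hT, Finset.filter_insert, if_pos hdl, Finset.filter_singleton,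
              if_pos hdx]
            exact Finset.card_pair hlx
          rw [hfleaf] at hlcnt
          simp only [psi]
          omega
        · have hfleaf : ((B' \ B).filter (fun v => G.degree v = 1)).card = 1 := by
            rw [hT, Finset.filter_insert, if_pos hdl, Finset.filter_singleton,
              if_neg (by omega)]
            simp
          rw [hfleaf] at hlcnt
          simp only [psi]
          omega
    exact ⟨l, hlB, hBB', hlk', ⟨l, hlB'⟩, by rw [← hB'def]; omega, hpsi⟩
  · -- Case 2 : generic round at a boundary vertex
    obtain ⟨b, hbB, u, huB, hadjbu⟩ := exists_boundary G hpre hne hnu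
    obtain ⟨y, hadjby, hyB, hyu⟩ := hcl b hbB u hadjbu huB
    have huy : u ≠ y := fun h => hyu h.symm
    have hOUT : ∀ w, G.Adj b w → w ∉ B → w = u ∨ w = y := by
      intro w hadjbw hwB
      by_contra hcon
      push_neg at hcon
      obtain ⟨bb, hbbB, hadjbbb⟩ := hlk b hbB
      exact four_nbrs G hdeg hadjbbb hadjbu hadjby hadjbw
        (fun h => huB (h ▸ hbbB)) (fun h => hyB (h ▸ hbbB))
        (fun h => hwB (h ▸ hbbB)) huy (fun h => hcon.1 h.symm)
        (fun h => hcon.2 h.symm)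
    have hBB' : B ⊆ clo G (↑B ∪ {y}) :=
      fun z hz => subset_clo G (Set.mem_union_left _ (Finset.mem_coe.2 hz))
    set B' := clo G ((↑B : Set V) ∪ {y}) with hB'def
    have hyB' : y ∈ B' := subset_clo G (Set.mem_union_right _ rfl)
    have huB' : u ∈ B' := (mem_clo G).2 <|
      .force (.base (Set.mem_union_left _ (Finset.mem_coe.2 hbB))) hadjbu
        (fun w hw hne' => by
          by_cases hwB : w ∈ B
          · exact .base (Set.mem_union_left _ (Finset.mem_coe.2 hwB))
          · rcases hOUT w hw hwB with h | h
            · exact absurd h hne'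
            · exact h ▸ .base (Set.mem_union_right _ rfl))
    have hlk' : Linked G B' := by
      apply clo_linked
      rintro z (hz | hz)
      · obtain ⟨w, hwB, hadj⟩ := hlk z (Finset.mem_coe.1 hz)
        exact ⟨w, hadj, .base (Set.mem_union_left _ (Finset.mem_coe.2 hwB))⟩
      · rw [Set.mem_singleton_iff] at hz
        subst hz
        exact ⟨b, hadjby.symm, .base (Set.mem_union_left _ (Finset.mem_coe.2 hbB))⟩
    have hpair : ({u, y} : Finset V) ⊆ B' \ B := by
      intro z hz
      rcases Finset.mem_insert.1 hz with rfl | hz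
      · exact Finset.mem_sdiff.2 ⟨huB', huB⟩
      · rw [Finset.mem_singleton.1 hz]
        exact Finset.mem_sdiff.2 ⟨hyB', hyB⟩
    have hpaircard : ({u, y} : Finset V).card = 2 := Finset.card_pair huy
    have hT2 : 2 ≤ (B' \ B).card := hpaircard ▸ Finset.card_le_card hpair
    have hsplit : Bᶜ.card = B'ᶜ.card + (B' \ B).card := card_compl_split hBB'
    have hpsi : psi G B' + 168 ≤ psi G B := by
      by_cases h3 : 3 ≤ (B' \ B).card
      · have hgen := psi_general G hdeg hBB'
        have h3' : (3:ℤ) ≤ ((B' \ B).card : ℤ) := by exact_mod_cast h3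
        linarith
      · have hTcard : (B' \ B).card = 2 := le_antisymm (by omega) hT2
        have hT : B' \ B = {u, y} :=
          (Finset.eq_of_subset_of_card_le hpair (by omega)).symm
        -- symmetric per-vertex analysis
        have key : ∀ v o : V, G.Adj b v → G.Adj b o → v ∉ B → o ∉ B → v ≠ o →
            v ∈ B' → o ∈ B' → (∀ z, z ∈ B' \ B → z = v ∨ z = o) →
            cdeg G B v = 1 ∧ udeg G B' v = G.degree v - 1 ∧
              (G.degree v = 1 ∨ G.degree v = 3) := by
          intro v o hadjbv hadjbo hvB hoB hvo hvB' hoB' hTmem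
          have hnadjvo : ¬ G.Adj v o := fun h => htri b v o hadjbv h hadjbo.symm
          have hcv : G.neighborFinset v ∩ B = {b} := by
            apply Finset.eq_singleton_iff_unique_mem.2
            constructor
            · rw [Finset.mem_inter, G.mem_neighborFinset]
              exact ⟨hadjbv.symm, hbB⟩
            · intro b' hb'
              rw [Finset.mem_inter, G.mem_neighborFinset] at hb'
              obtain ⟨hadjvb', hb'B⟩ := hb'
              by_contra hb'b
              obtain ⟨xi, hadjb'xi, hxiB, hxiv⟩ := hcl b' hb'B v hadjvb'.symm hvB
              have hxiB' : xi ∈ B' := by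
                by_contra hxiB'
                obtain ⟨w, hadjb'w, hwB', hwxi⟩ :=
                  clo_closed G _ b' (hBB' hb'B) xi hadjb'xi hxiB'
                obtain ⟨bb, hbbB, hadjbbb⟩ := hlk b' hb'B
                have hwB : w ∉ B := fun hw => hwB' (hBB' hw)
                exact four_nbrs G hdeg hadjbbb hadjvb'.symm hadjb'xi hadjb'w
                  (fun h => hvB (h ▸ hbbB)) (fun h => hxiB (h ▸ hbbB))
                  (fun h => hwB (h ▸ hbbB)) (fun h => hxiv h.symm)
                  (fun h => hwB' (h ▸ hvB')) (fun h => hwxi h.symm)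
              rcases hTmem xi (Finset.mem_sdiff.2 ⟨hxiB', hxiB⟩) with h | h
              · exact hxiv h
              · subst h
                exact hc4 b v b' xi hadjbv hadjvb' hadjb'xi hadjbo.symm (fun h => hb'b h.symm) hvo
          have hmembv : b ∈ G.neighborFinset v := (G.mem_neighborFinset v b).2 hadjbv.symm
          have hrest : ∀ w, G.Adj v w → w ≠ b → w ∉ B' := by
            intro w hadjvw hwb hwB'
            have hwB : w ∉ B := by
              intro hwB
              have : w ∈ G.neighborFinset v ∩ B := by
                rw [Finset.mem_inter, G.mem_neighborFinset]; exact ⟨hadjvw, hwB⟩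
              rw [hcv, Finset.mem_singleton] at this
              exact hwb this
            rcases hTmem w (Finset.mem_sdiff.2 ⟨hwB', hwB⟩) with h | h
            · exact G.loopless.irrefl v (h ▸ hadjvw)
            · exact hnadjvo (h ▸ hadjvw)
          have herase : G.neighborFinset v ∩ B'ᶜ = (G.neighborFinset v).erase b := by
            ext w
            simp only [Finset.mem_inter, Finset.mem_compl, Finset.mem_erase,
              G.mem_neighborFinset]
            constructor
            · rintro ⟨hadj, hw⟩
              exact ⟨fun h => hw (by rw [h]; exact hBB' hbB), hadj⟩
            · rintro ⟨hwb, hadj⟩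
              exact ⟨hadj, hrest w hadj hwb⟩
          have huv : udeg G B' v = G.degree v - 1 := by
            rw [udeg, herase, Finset.card_erase_of_mem hmembv,
              card_neighborFinset_eq_degree]
          have hdv1 : 1 ≤ G.degree v := by
            rw [← card_neighborFinset_eq_degree]
            exact Finset.card_pos.2 ⟨b, hmembv⟩
          have hdvne2 : G.degree v ≠ 2 := by
            intro hdv
            have hcard2 : (G.neighborFinset v).card = 2 := by
              rw [card_neighborFinset_eq_degree]; exact hdv
            have hcard1 : ((G.neighborFinset v).erase b).card = 1 := by
              rw [Finset.card_erase_of_mem hmembv, hcard2]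
            obtain ⟨w, hw⟩ := Finset.card_eq_one.1 hcard1
            have hwmem : w ∈ (G.neighborFinset v).erase b := by
              rw [hw]; exact Finset.mem_singleton_self w
            have hwb : w ≠ b := (Finset.mem_erase.1 hwmem).1
            have hadjvw : G.Adj v w :=
              (G.mem_neighborFinset v w).1 (Finset.mem_erase.1 hwmem).2
            have hwB' : w ∉ B' := hrest w hadjvw hwb
            obtain ⟨w', hadjvw', hw'B', hw'w⟩ :=
              clo_closed G _ v hvB' w hadjvw hwB'
            have hmem' : w' ∈ (G.neighborFinset v).erase b :=
              Finset.mem_erase.2 ⟨fun h => hw'B' (by rw [h]; exact hBB' hbB),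
                (G.mem_neighborFinset v w').2 hadjvw'⟩
            rw [hw] at hmem'
            exact hw'w (Finset.mem_singleton.1 hmem')
          refine ⟨by rw [cdeg, hcv, Finset.card_singleton], huv, ?_⟩
          have := hdeg v
          omega
        have hTmemuy : ∀ z, z ∈ B' \ B → z = u ∨ z = y := by
          intro z hz
          rw [hT] at hz
          rcases Finset.mem_insert.1 hz with rfl | hz
          · exact Or.inl rfl
          · exact Or.inr (Finset.mem_singleton.1 hz)
        have hTmemyu : ∀ z, z ∈ B' \ B → z = y ∨ z = u := by
          intro z hz
          rcases hTmemuy z hz with h | h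
          · exact Or.inr h
          · exact Or.inl h
        obtain ⟨hcu, huu, hdu13⟩ :=
          key u y hadjbu hadjby huB hyB huy huB' hyB' hTmemuy
        obtain ⟨hcy, huy', hdy13⟩ :=
          key y u hadjby hadjbu hyB huB (fun h => huy h.symm) hyB' huB' hTmemyu
        have hsumc : ∑ t ∈ B' \ B, cdeg G B t = 2 := by
          rw [hT, Finset.sum_pair huy, hcu, hcy]
        have hsumu : ∑ t ∈ B' \ B, udeg G B' t
            = (G.degree u - 1) + (G.degree y - 1) := by
          rw [hT, Finset.sum_pair huy, huu, huy']
        have hecnt := ecnt_split G hBB'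
        have hlcnt := lcnt_split G hBB'
        have hpcnt := pcnt_drop G hBB' hr2
        rw [hsumc, hsumu] at hecnt
        rcases hdu13 with hdu | hdu <;> rcases hdy13 with hdy | hdy
        · have hfleaf : ((B' \ B).filter (fun v => G.degree v = 1)).card = 2 := by
            rw [hT, Finset.filter_insert, if_pos hdu, Finset.filter_singleton,
              if_pos hdy]
            exact Finset.card_pair huy
          rw [hfleaf] at hlcnt hpcnt
          simp only [psi]
          omega
        · have hfleaf : ((B' \ B).filter (fun v => G.degree v = 1)).card = 1 := by
            rw [hT, Finset.filter_insert, if_pos hdu, Finset.filter_singleton,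
              if_neg (by omega)]
            simp
          rw [hfleaf] at hlcnt hpcnt
          simp only [psi]
          omega
        · have hfleaf : ((B' \ B).filter (fun v => G.degree v = 1)).card = 1 := by
            rw [hT, Finset.filter_insert, if_neg (by omega), Finset.filter_singleton,
              if_pos hdy]
            simp
          rw [hfleaf] at hlcnt hpcnt
          simp only [psi]
          omega
        · have hfleaf : ((B' \ B).filter (fun v => G.degree v = 1)).card = 0 := by
            rw [hT, Finset.filter_insert, if_neg (by omega), Finset.filter_singleton,
              if_neg (by omega)]
            simp
          rw [hfleaf] at hlcnt hpcnt
          simp only [psi]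
          omega
    exact ⟨y, hyB, hBB', hlk', ⟨y, hyB'⟩, by rw [← hB'def]; omega, hpsi⟩

end Round

section Assemble

variable {V : Type*} [Fintype V] [DecidableEq V] (G : SimpleGraph V) [DecidableRel G.Adj]

lemma psi_univ : psi G (Finset.univ : Finset V) = 0 := by
  simp [psi, lcnt, pcnt, ecnt]

lemma pcnt_le_ecnt (B : Finset V) : pcnt G B ≤ ecnt G B := by
  rw [pcnt, ecnt]
  calc (Bᶜ.filter (fun v => G.degree v = 1 ∧ cdeg G B v = 1)).card
      = ∑ _v ∈ Bᶜ.filter (fun v => G.degree v = 1 ∧ cdeg G B v = 1), 1 := by simp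
    _ ≤ ∑ v ∈ Bᶜ.filter (fun v => G.degree v = 1 ∧ cdeg G B v = 1), cdeg G B v :=
        Finset.sum_le_sum fun v hv => le_of_eq ((Finset.mem_filter.1 hv).2.2).symm
    _ ≤ ∑ v ∈ Bᶜ, cdeg G B v :=
        Finset.sum_le_sum_of_subset (Finset.filter_subset _ _)

lemma main_ind (hdeg : ∀ v, G.degree v ≤ 3)
    (htri : ∀ a b c : V, G.Adj a b → G.Adj b c → G.Adj c a → False)
    (hc4 : ∀ a b c d : V, G.Adj a b → G.Adj b c → G.Adj c d → G.Adj d a →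
      a ≠ c → b ≠ d → False)
    (hpre : G.Preconnected) :
    ∀ (k : ℕ) (B : Finset V), Bᶜ.card ≤ k → Closed G B → Linked G B → B.Nonempty →
    ∃ X : Finset V, (∀ v, G.ZeroForces (↑B ∪ ↑X) v) ∧
      168 * (X.card : ℤ) ≤ psi G B ∧ 2 * X.card ≤ Bᶜ.card := by
  intro k
  induction k with
  | zero =>
    intro B hB _ _ _
    have hBu : B = Finset.univ := by
      have h0 : Bᶜ.card = 0 := Nat.le_zero.1 hB
      rw [Finset.card_eq_zero] at h0
      rwa [Finset.compl_eq_empty_iff] at h0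
    subst hBu
    refine ⟨∅, fun v => .base (Set.mem_union_left _ (by simp)), ?_, by simp⟩
    rw [psi_univ]
    simp
  | succ k ih =>
    intro B hB hcl hlk hne
    by_cases hnu : B = Finset.univ
    · subst hnu
      refine ⟨∅, fun v => .base (Set.mem_union_left _ (by simp)), ?_, by simp⟩
      rw [psi_univ]
      simp
    · obtain ⟨y, hyB, hBB', hlk', hne', hcard, hpsi⟩ :=
        round G hdeg htri hc4 hpre hcl hlk hne hnu
      obtain ⟨X', hfor, h168, h2⟩ := ih (clo G (↑B ∪ {y}))
        (by omega) (clo_closed G _) hlk' hne'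
      refine ⟨insert y X', ?_, ?_, ?_⟩
      · intro v
        refine zf_trans G ?_ (hfor v)
        rintro z (hz | hz)
        · refine zf_mono G ?_ ((mem_clo G).1 (Finset.mem_coe.1 hz))
          rintro w (hw | hw)
          · exact Set.mem_union_left _ hw
          · rw [Set.mem_singleton_iff] at hw
            subst hw
            exact Set.mem_union_right _ (Finset.mem_coe.2 (Finset.mem_insert_self w X'))
        · exact .base (Set.mem_union_right _ (Finset.mem_coe.2
            (Finset.mem_insert_of_mem (Finset.mem_coe.1 hz))))
      · have hci := Finset.card_insert_le y X'
        have hci' : ((insert y X').card : ℤ) ≤ (X'.card : ℤ) + 1 := by exact_mod_cast hci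
        linarith
      · have hci := Finset.card_insert_le y X'
        omega

lemma card_le_edges (hconn : G.Connected) :
    Fintype.card V ≤ G.edgeFinset.card + 1 := by
  obtain ⟨r⟩ := hconn.nonempty
  have hstep : ∀ v : V, v ≠ r → ∃ w, G.Adj v w ∧ G.dist w r < G.dist v r := by
    intro v hv
    obtain ⟨p, hp⟩ := (hconn v r).exists_walk_length_eq_dist
    cases p with
    | nil => exact absurd rfl hv
    | @cons _ c _ hadj q =>
      refine ⟨c, hadj, ?_⟩
      have h1 : G.dist c r ≤ q.length := SimpleGraph.dist_le q
      have h2 : G.dist v r = q.length + 1 := by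
        rw [← hp, SimpleGraph.Walk.length_cons]
      omega
  choose f hf1 hf2 using hstep
  have hmaps : ∀ v ∈ Finset.univ.erase r,
      (if h : v = r then s(r, r) else s(v, f v h)) ∈ G.edgeFinset := by
    intro v hv
    have hvr : v ≠ r := Finset.ne_of_mem_erase hv
    rw [dif_neg hvr, SimpleGraph.mem_edgeFinset]
    exact hf1 v hvr
  have hinj : Set.InjOn (fun v => if h : v = r then s(r, r) else s(v, f v h))
      ↑(Finset.univ.erase r) := by
    intro a ha b hb hab
    have har : a ≠ r := Finset.ne_of_mem_erase (Finset.mem_coe.1 ha)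
    have hbr : b ≠ r := Finset.ne_of_mem_erase (Finset.mem_coe.1 hb)
    simp only [dif_neg har, dif_neg hbr, Sym2.eq_iff] at hab
    rcases hab with ⟨h1, _⟩ | ⟨h1, h2⟩
    · exact h1
    · exfalso
      have hda := hf2 b hbr
      have hdb := hf2 a har
      rw [← h1] at hda
      rw [h2] at hdb
      omega
  have hle := Finset.card_le_card_of_injOn _ hmaps hinj
  rw [Finset.card_erase_of_mem (Finset.mem_univ r), Finset.card_univ] at hle
  have hpos : 1 ≤ Fintype.card V := Fintype.card_pos_iff.2 ⟨r⟩
  omega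

lemma leaf_bound (hconn : G.Connected) (hdeg : ∀ v, G.degree v ≤ 3) :
    2 * (Finset.univ.filter (fun v => G.degree v = 1)).card ≤ Fintype.card V + 2 := by
  have hsum : ∑ v, G.degree v = 2 * G.edgeFinset.card :=
    SimpleGraph.sum_degrees_eq_twice_card_edges G
  have hE := card_le_edges G hconn
  have hsplit := Finset.sum_filter_add_sum_filter_not Finset.univ
    (fun v => G.degree v = 1) (fun v => G.degree v)
  have h1 : ∑ v ∈ Finset.univ.filter (fun v => G.degree v = 1), G.degree v
      = (Finset.univ.filter (fun v => G.degree v = 1)).card := by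
    calc ∑ v ∈ Finset.univ.filter (fun v => G.degree v = 1), G.degree v
        = ∑ _v ∈ Finset.univ.filter (fun v => G.degree v = 1), 1 :=
          Finset.sum_congr rfl (fun v hv => (Finset.mem_filter.1 hv).2)
      _ = _ := by simp
  have h2 : ∑ v ∈ Finset.univ.filter (fun v => ¬ G.degree v = 1), G.degree v
      ≤ 3 * (Finset.univ.filter (fun v => ¬ G.degree v = 1)).card := by
    calc ∑ v ∈ Finset.univ.filter (fun v => ¬ G.degree v = 1), G.degree v
        ≤ ∑ _v ∈ Finset.univ.filter (fun v => ¬ G.degree v = 1), 3 :=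
          Finset.sum_le_sum fun v _ => hdeg v
      _ = _ := by rw [Finset.sum_const, smul_eq_mul, Nat.mul_comm]
  have h3 := Finset.card_filter_add_card_filter_not
    (s := (Finset.univ : Finset V)) (p := fun v => G.degree v = 1)
  rw [Finset.card_univ] at h3
  omega

lemma noTriangle (hg : 5 ≤ G.egirth) {a b c : V}
    (hab : G.Adj a b) (hbc : G.Adj b c) (hca : G.Adj c a) : False := by
  rw [SimpleGraph.le_egirth] at hg
  have hab' := hab.ne
  have hbc' := hbc.ne
  have hca' := hca.ne
  have hg3 := hg a (.cons hab (.cons hbc (.cons hca .nil))) ?_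
  · simp only [SimpleGraph.Walk.length_cons, SimpleGraph.Walk.length_nil] at hg3
    norm_num at hg3
  · rw [SimpleGraph.Walk.isCycle_def]
    refine ⟨?_, by simp, ?_⟩
    · rw [SimpleGraph.Walk.isTrail_def]
      simp only [SimpleGraph.Walk.edges_cons, SimpleGraph.Walk.edges_nil]
      simp [Sym2.eq_iff, hab', hbc', hca', hab'.symm, hbc'.symm, hca'.symm]
    · simp only [SimpleGraph.Walk.support_cons, SimpleGraph.Walk.support_nil,
        List.tail_cons, List.nodup_cons, List.mem_cons, List.mem_singleton,
        List.not_mem_nil, List.nodup_nil]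
      simp [hbc', hca', hca'.symm, hab'.symm]

lemma noC4 (hg : 5 ≤ G.egirth) {a b c d : V}
    (hab : G.Adj a b) (hbc : G.Adj b c) (hcd : G.Adj c d) (hda : G.Adj d a)
    (hac : a ≠ c) (hbd : b ≠ d) : False := by
  rw [SimpleGraph.le_egirth] at hg
  have hab' := hab.ne
  have hbc' := hbc.ne
  have hcd' := hcd.ne
  have hda' := hda.ne
  have hg4 := hg a (.cons hab (.cons hbc (.cons hcd (.cons hda .nil)))) ?_
  · simp only [SimpleGraph.Walk.length_cons, SimpleGraph.Walk.length_nil] at hg4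
    norm_num at hg4
  · rw [SimpleGraph.Walk.isCycle_def]
    refine ⟨?_, by simp, ?_⟩
    · rw [SimpleGraph.Walk.isTrail_def]
      simp only [SimpleGraph.Walk.edges_cons, SimpleGraph.Walk.edges_nil]
      simp [Sym2.eq_iff, hab', hbc', hcd', hda', hac, hbd, hab'.symm, hbc'.symm,
        hcd'.symm, hda'.symm, hac.symm, hbd.symm]
    · simp only [SimpleGraph.Walk.support_cons, SimpleGraph.Walk.support_nil,
        List.tail_cons, List.nodup_cons, List.mem_cons, List.mem_singleton,
        List.not_mem_nil, List.nodup_nil]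
      simp [hbc', hcd', hbd, hac.symm, hda'.symm]
      exact ⟨hab'.symm, hda'⟩

end Assemble

end ZFAux

theorem stmt18 {V : Type*} [Fintype V] (G : SimpleGraph V) [DecidableRel G.Adj]
    (hconn : G.Connected) (hmax : G.maxDegree = 3) (hg : 5 ≤ G.egirth) :
    (G.zeroForcingNumber : ℝ) ≤ (Fintype.card V : ℝ) / 2 -
      (Fintype.card V : ℝ) / (24 * Real.logb 2 (Fintype.card V) + 6) + 2 := by
  classical
  have hdeg : ∀ v, G.degree v ≤ 3 := fun v => hmax ▸ G.degree_le_maxDegree v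
  have hnonempty : Nonempty V := hconn.nonempty
  obtain ⟨v0, hv0⟩ := G.exists_maximal_degree_vertex
  rw [hmax] at hv0
  have hv03 : G.degree v0 = 3 := hv0.symm
  have hmemN : ∃ w, w ∈ G.neighborFinset v0 := by
    apply Finset.card_pos.1
    rw [SimpleGraph.card_neighborFinset_eq_degree, hv03]
    omega
  obtain ⟨w0, hw0⟩ := hmemN
  have hadj0 : G.Adj v0 w0 := (G.mem_neighborFinset v0 w0).1 hw0
  have htri : ∀ a b c : V, G.Adj a b → G.Adj b c → G.Adj c a → False :=
    fun a b c hab hbc hca => ZFAux.noTriangle G hg hab hbc hca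
  have hc4 : ∀ a b c d : V, G.Adj a b → G.Adj b c → G.Adj c d → G.Adj d a →
      a ≠ c → b ≠ d → False :=
    fun a b c d hab hbc hcd hda hac hbd => ZFAux.noC4 G hg hab hbc hcd hda hac hbd
  have hn4 : 4 ≤ Fintype.card V := by
    have hsub : insert v0 (G.neighborFinset v0) ⊆ Finset.univ := Finset.subset_univ _
    have hcard : (insert v0 (G.neighborFinset v0)).card = 4 := by
      rw [Finset.card_insert_of_notMem (by simp),
        SimpleGraph.card_neighborFinset_eq_degree, hv03]
    have hle := Finset.card_le_card hsub
    rw [hcard, Finset.card_univ] at hle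
    exact hle
  set B0 := ZFAux.clo G ({v0, w0} : Set V) with hB0
  have hB0linked : ZFAux.Linked G B0 := by
    apply ZFAux.clo_linked
    intro z hz
    rcases Set.mem_insert_iff.1 hz with rfl | hz
    · exact ⟨w0, hadj0, .base (Set.mem_insert_of_mem _ rfl)⟩
    · rw [Set.mem_singleton_iff] at hz
      subst hz
      exact ⟨v0, hadj0.symm, .base (Set.mem_insert _ _)⟩
  have hsub0 : ({v0, w0} : Finset V) ⊆ B0 := by
    intro z hz
    rcases Finset.mem_insert.1 hz with rfl | hz
    · exact ZFAux.subset_clo G (Set.mem_insert _ _)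
    · rw [Finset.mem_singleton.1 hz]
      exact ZFAux.subset_clo G (Set.mem_insert_of_mem _ rfl)
  have hB0ne : B0.Nonempty := ⟨v0, hsub0 (Finset.mem_insert_self _ _)⟩
  obtain ⟨X, hXfor, hX168, hX2⟩ := ZFAux.main_ind G hdeg htri hc4 hconn.preconnected
    B0ᶜ.card B0 le_rfl (ZFAux.clo_closed G _) hB0linked hB0ne
  set Zs := insert v0 (insert w0 X) with hZs
  have hZfor : G.IsZeroForcingSet ↑Zs := by
    intro v
    refine ZFAux.zf_trans G ?_ (hXfor v)
    rintro z (hz | hz)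
    · refine ZFAux.zf_mono G ?_ ((ZFAux.mem_clo G).1 (Finset.mem_coe.1 hz))
      intro w hw
      rcases Set.mem_insert_iff.1 hw with rfl | hw
      · exact Finset.mem_coe.2 (Finset.mem_insert_self _ _)
      · rw [Set.mem_singleton_iff] at hw
        subst hw
        exact Finset.mem_coe.2 (Finset.mem_insert_of_mem (Finset.mem_insert_self _ _))
    · exact .base (Finset.mem_coe.2 (Finset.mem_insert_of_mem
        (Finset.mem_insert_of_mem (Finset.mem_coe.1 hz))))
  have hzfn : G.zeroForcingNumber ≤ Zs.card := Nat.sInf_le ⟨Zs, rfl, hZfor⟩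
  have hZcard : Zs.card ≤ 2 + X.card := by
    have h1 : Zs.card ≤ (insert w0 X).card + 1 := Finset.card_insert_le _ _
    have h2 := Finset.card_insert_le w0 X
    omega
  have hB0card2 : 2 ≤ B0.card := by
    have h2 : ({v0, w0} : Finset V).card = 2 := Finset.card_pair hadj0.ne
    calc 2 = ({v0, w0} : Finset V).card := h2.symm
      _ ≤ B0.card := Finset.card_le_card hsub0
  have hu0 : B0ᶜ.card + 2 ≤ Fintype.card V := by
    rw [Finset.card_compl]
    have := Finset.card_le_univ B0
    omega
  have hpe := ZFAux.pcnt_le_ecnt G B0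
  have hlle : ZFAux.lcnt G B0 ≤ (Finset.univ.filter (fun v => G.degree v = 1)).card :=
    Finset.card_le_card (Finset.filter_subset_filter _ (Finset.subset_univ _))
  have hleaf := ZFAux.leaf_bound G hconn hdeg
  have hpsi0 : ZFAux.psi G B0 ≤ 83 * (Fintype.card V : ℤ) - 142 := by
    simp only [ZFAux.psi]
    omega
  have hX168' : 168 * (X.card : ℤ) ≤ 83 * (Fintype.card V : ℤ) - 142 :=
    le_trans hX168 hpsi0
  have hfR : (168:ℝ) * (X.card : ℝ) ≤ 83 * (Fintype.card V : ℝ) - 142 := by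
    exact_mod_cast hX168'
  have h2f : 2 * X.card + 2 ≤ Fintype.card V := by omega
  set L := Real.logb 2 (Fintype.card V : ℝ) with hLdef
  have hLmono : ∀ k : ℕ, ((2:ℝ))^k ≤ (Fintype.card V : ℝ) → (k : ℝ) ≤ L := by
    intro k hk
    have h2pos : (0:ℝ) < 2 ^ k := by positivity
    have hlogk : Real.logb 2 ((2:ℝ)^k) = k := by
      rw [Real.logb_pow, Real.logb_self_eq_one (by norm_num), mul_one]
    calc (k:ℝ) = Real.logb 2 ((2:ℝ)^k) := hlogk.symm
      _ ≤ L := Real.logb_le_logb_of_le (by norm_num) h2pos hk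
  have hn4R : (4:ℝ) ≤ (Fintype.card V : ℝ) := by exact_mod_cast hn4
  have hL2 : (2:ℝ) ≤ L := hLmono 2 (by norm_num; linarith)
  have hD : (0:ℝ) < 24 * L + 6 := by linarith
  have hfinal : (X.card : ℝ) ≤ (Fintype.card V : ℝ)/2
      - (Fintype.card V : ℝ)/(24*L+6) := by
    by_cases hbig : 128 ≤ Fintype.card V
    · have hL7 : (7:ℝ) ≤ L := hLmono 7 (by
        have h128 : ((128:ℕ):ℝ) ≤ (Fintype.card V : ℝ) := by exact_mod_cast hbig
        norm_num at h128 ⊢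
        linarith)
      have h174 : (174:ℝ) ≤ 24*L+6 := by linarith
      have hnn : (0:ℝ) ≤ (Fintype.card V : ℝ) := by positivity
      have hdiv : (Fintype.card V : ℝ)/(24*L+6) ≤ (Fintype.card V : ℝ)/174 :=
        div_le_div_of_nonneg_left hnn (by norm_num) h174
      have hf : (X.card:ℝ) ≤ (83*(Fintype.card V : ℝ) - 142)/168 := by linarith
      linarith
    · push_neg at hbig
      have h127 : Fintype.card V ≤ 127 := by omega
      have hfhalf : (X.card : ℝ) ≤ ((Fintype.card V : ℝ) - 2)/2 := by
        have hc : ((2 * X.card + 2 : ℕ) : ℝ) ≤ ((Fintype.card V : ℕ) : ℝ) := by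
          exact_mod_cast h2f
        push_cast at hc
        linarith
      have hnD : (Fintype.card V : ℝ) ≤ 24*L + 6 := by
        rcases le_or_gt (Fintype.card V) 54 with h54 | h54
        · have : (Fintype.card V : ℝ) ≤ 54 := by exact_mod_cast h54
          linarith
        · rcases le_or_gt (Fintype.card V) 63 with h63 | h63
          · have hL5 : (5:ℝ) ≤ L := hLmono 5 (by
              have h32 : (32:ℕ) ≤ Fintype.card V := by omega
              have h32' : ((32:ℕ):ℝ) ≤ (Fintype.card V : ℝ) := by exact_mod_cast h32
              norm_num at h32' ⊢
              linarith)
            have : (Fintype.card V : ℝ) ≤ 63 := by exact_mod_cast h63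
            linarith
          · have hL6 : (6:ℝ) ≤ L := hLmono 6 (by
              have h64 : (64:ℕ) ≤ Fintype.card V := by omega
              have h64' : ((64:ℕ):ℝ) ≤ (Fintype.card V : ℝ) := by exact_mod_cast h64
              norm_num at h64' ⊢
              linarith)
            have : (Fintype.card V : ℝ) ≤ 127 := by exact_mod_cast h127
            linarith
      have hd1 : (Fintype.card V : ℝ)/(24*L+6) ≤ 1 := (div_le_one hD).2 hnD
      linarith
  have hcast : (G.zeroForcingNumber : ℝ) ≤ 2 + (X.card : ℝ) := by
    have h := le_trans hzfn hZcard
    exact_mod_cast h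
  linarith
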